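/- Greedy earliest-arrival concatenation with respect to a goal-vertex visiting order is not optimal in general: there exists an undirected graph G=(V,E), a start vertex s, two goal vertices g1, g2, and a set of vertex/edge constraints, such that for every visiting order of the goal vertices, the path formed by concatenating (i) a shortest constraint-respecting path from the start at time 0 to the first goal and (ii) a shortest constraint-respecting path from that arrival state to the second goal has strictly greater completion time than the true minimum completion time over all constraint-respecting paths visiting both goals. -/

import Mathlib

structure TPath {V : Type*} (G : SimpleGraph V) where
  start : ℕ
  len : ℕ
  pos : ℕ → V
  step : ∀ i, i < len → pos (i + 1) = pos i ∨ G.Adj (pos i) (pos (i + 1))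

namespace TPath

variable {V : Type*} {G : SimpleGraph V}

def Respects (p : TPath G) (C : Set (ℕ × V)) : Prop :=
  ∀ i, i ≤ p.len → (p.start + i, p.pos i) ∉ C

def Visits (p : TPath G) (g : V) : Prop :=
  ∃ i, i ≤ p.len ∧ p.pos i = g

def completion (p : TPath G) : ℕ := p.start + p.len

end TPath

/-- The path violates no vertex constraint in `CV` and no (directed) edge
constraint in `CE`. -/
def Respects2 {V : Type*} {G : SimpleGraph V} (p : TPath G)
    (CV : Set (ℕ × V)) (CE : Set (ℕ × V × V)) : Prop :=
  (∀ i, i ≤ p.len → (p.start + i, p.pos i) ∉ CV) ∧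
  (∀ i, i < p.len → (p.start + i, p.pos i, p.pos (i + 1)) ∉ CE)

/-- Earliest arrival time at vertex `tgt` by a constraint-respecting path
starting from `(t, u)`. -/
noncomputable def earliestArrive2 {V : Type*} (G : SimpleGraph V)
    (CV : Set (ℕ × V)) (CE : Set (ℕ × V × V)) (t : ℕ) (u tgt : V) : ℕ∞ :=
  sInf {n : ℕ∞ | ∃ p : TPath G, p.start = t ∧ p.pos 0 = u ∧ Respects2 p CV CE ∧
    p.pos p.len = tgt ∧ (p.completion : ℕ∞) = n}

/-- True minimum completion time over all constraint-respecting paths from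
`(0, s)` visiting both goals. -/
noncomputable def opt2 {V : Type*} (G : SimpleGraph V)
    (CV : Set (ℕ × V)) (CE : Set (ℕ × V × V)) (s g1 g2 : V) : ℕ∞ :=
  sInf {n : ℕ∞ | ∃ p : TPath G, p.start = 0 ∧ p.pos 0 = s ∧ Respects2 p CV CE ∧
    p.Visits g1 ∧ p.Visits g2 ∧ (p.completion : ℕ∞) = n}

/-! ### Counterexample instance -/

def adjB : Fin 4 → Fin 4 → Bool := fun a b =>
  ((a,b) = ((0:Fin 4),(1:Fin 4))) || ((a,b) = (1,0)) || ((a,b) = (0,3)) || ((a,b) = (3,0)) ||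
  ((a,b) = (1,3)) || ((a,b) = (3,1)) || ((a,b) = (1,2)) || ((a,b) = (2,1))

def myG : SimpleGraph (Fin 4) where
  Adj a b := adjB a b
  symm := by constructor; intro a b; revert a b; decide
  loopless := by constructor; intro a; revert a; decide

instance : DecidableRel myG.Adj := fun a b =>
  inferInstanceAs (Decidable (adjB a b = true))

def ceB : ℕ × Fin 4 × Fin 4 → Bool := fun x =>
  (x.1 == 1) && (x.2.1 == 1) && (x.2.2 == 1 || x.2.2 == 2 || x.2.2 == 3)

def myCE : Set (ℕ × Fin 4 × Fin 4) := {x | ceB x}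

instance : DecidablePred (· ∈ myCE) := fun x =>
  inferInstanceAs (Decidable (ceB x = true))

lemma fin4cases (x : Fin 4) : x = 0 ∨ x = 1 ∨ x = 2 ∨ x = 3 := by revert x; decide

/-- s → g1 -/
def path1 : TPath myG where
  start := 0
  len := 1
  pos := fun i => if i = 0 then 0 else 1
  step := by intro i hi; interval_cases i; right; decide

/-- g1 → s → g1 → g2, starting at time 1 -/
def path2 : TPath myG where
  start := 1
  len := 3
  pos := fun i => [1, 0, 1, 2].getD i 2
  step := by intro i hi; interval_cases i <;> (right; decide)

/-- s → x → g1 → g2 (the optimal path; also witnesses earliest arrival at g2) -/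
def path3 : TPath myG where
  start := 0
  len := 3
  pos := fun i => [0, 3, 1, 2].getD i 2
  step := by intro i hi; interval_cases i <;> (right; decide)

/-- g2 → g1, starting at time 3 -/
def path4 : TPath myG where
  start := 3
  len := 1
  pos := fun i => if i = 0 then 2 else 1
  step := by intro i hi; interval_cases i; right; decide

lemma resp1 : Respects2 path1 ∅ myCE := by
  constructor
  · intro i _ h; simp at h
  · intro i hi
    have hi' : i < 1 := hi
    interval_cases i; decide

lemma resp2 : Respects2 path2 ∅ myCE := by
  constructor
  · intro i _ h; simp at h
  · intro i hi
    have hi' : i < 3 := hi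
    interval_cases i <;> decide

lemma resp3 : Respects2 path3 ∅ myCE := by
  constructor
  · intro i _ h; simp at h
  · intro i hi
    have hi' : i < 3 := hi
    interval_cases i <;> decide

lemma resp4 : Respects2 path4 ∅ myCE := by
  constructor
  · intro i _ h; simp at h
  · intro i hi
    have hi' : i < 1 := hi
    interval_cases i; decide

lemma e1 : earliestArrive2 myG ∅ myCE 0 0 1 = 1 := by
  apply le_antisymm
  · apply sInf_le
    exact ⟨path1, rfl, rfl, resp1, rfl, by norm_num [TPath.completion, path1]⟩
  · apply le_sInf
    rintro n ⟨p, hs, h0, _, hend, rfl⟩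
    obtain ⟨st, L, pos, hstep⟩ := p
    simp only [TPath.completion] at *
    subst hs
    rcases L with _ | L
    · rw [h0] at hend; exact absurd hend (by decide)
    · exact_mod_cast (by omega : (1:ℕ) ≤ 0 + (L+1))

lemma e2 : earliestArrive2 myG ∅ myCE 1 1 2 = 4 := by
  apply le_antisymm
  · apply sInf_le
    exact ⟨path2, rfl, rfl, resp2, rfl, by norm_num [TPath.completion, path2]⟩
  · apply le_sInf
    rintro n ⟨p, hs, h0, ⟨_, hCE⟩, hend, rfl⟩
    obtain ⟨st, L, pos, hstep⟩ := p
    simp only [TPath.completion] at *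
    subst hs
    have hL : 3 ≤ L := by
      by_contra hc
      push_neg at hc
      interval_cases L
      · rw [h0] at hend; exact absurd hend (by decide)
      · -- len 1 : move g1 → g2 at time 1 is forbidden
        have hc0 := hCE 0 (by omega)
        rw [h0, hend] at hc0
        exact hc0 (by decide)
      · -- len 2
        have hc0 := hCE 0 (by omega)
        have hs1 := hstep 1 (by omega)
        rw [h0] at hc0
        rw [hend] at hs1
        rcases fin4cases (pos 1) with h1 | h1 | h1 | h1 <;> rw [h1] at hc0 hs1
        · exact absurd hs1 (by decide)
        · exact hc0 (by decide)
        · exact hc0 (by decide)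
        · exact hc0 (by decide)
    exact_mod_cast (by omega : (4:ℕ) ≤ 1 + L)

lemma e3 : earliestArrive2 myG ∅ myCE 0 0 2 = 3 := by
  apply le_antisymm
  · apply sInf_le
    exact ⟨path3, rfl, rfl, resp3, rfl, by norm_num [TPath.completion, path3]⟩
  · apply le_sInf
    rintro n ⟨p, hs, h0, ⟨_, hCE⟩, hend, rfl⟩
    obtain ⟨st, L, pos, hstep⟩ := p
    simp only [TPath.completion] at *
    subst hs
    have hL : 3 ≤ L := by
      by_contra hc
      push_neg at hc
      interval_cases L
      · rw [h0] at hend; exact absurd hend (by decide)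
      · have hs0 := hstep 0 (by omega)
        rw [h0, hend] at hs0
        exact absurd hs0 (by decide)
      · have hs0 := hstep 0 (by omega)
        have hs1 := hstep 1 (by omega)
        have hc1 := hCE 1 (by omega)
        rw [h0] at hs0
        rw [hend] at hs1 hc1
        rcases fin4cases (pos 1) with h1 | h1 | h1 | h1 <;> rw [h1] at hs0 hs1 hc1
        · exact absurd hs1 (by decide)
        · exact hc1 (by decide)
        · exact absurd hs0 (by decide)
        · exact absurd hs1 (by decide)
    exact_mod_cast (by omega : (3:ℕ) ≤ 0 + L)

lemma e4 : earliestArrive2 myG ∅ myCE 3 2 1 = 4 := by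
  apply le_antisymm
  · apply sInf_le
    exact ⟨path4, rfl, rfl, resp4, rfl, by norm_num [TPath.completion, path4]⟩
  · apply le_sInf
    rintro n ⟨p, hs, h0, _, hend, rfl⟩
    obtain ⟨st, L, pos, hstep⟩ := p
    simp only [TPath.completion] at *
    subst hs
    rcases L with _ | L
    · rw [h0] at hend; exact absurd hend (by decide)
    · exact_mod_cast (by omega : (4:ℕ) ≤ 3 + (L+1))

lemma eopt : opt2 myG ∅ myCE 0 1 2 ≤ 3 := by
  apply sInf_le
  exact ⟨path3, rfl, rfl, resp3, ⟨2, by norm_num [path3], by decide⟩,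
    ⟨3, by norm_num [path3], by decide⟩, by norm_num [TPath.completion, path3]⟩


/-- Greedy earliest-arrival concatenation w.r.t. a goal-vertex visiting order
is not optimal in general: there is an instance where, for every visiting
order of the two goals, the concatenated earliest-arrival path is strictly
worse than the true optimum. -/

theorem statement2 :
    ∃ (V : Type) (G : SimpleGraph V) (s g1 g2 : V)
      (CV : Set (ℕ × V)) (CE : Set (ℕ × V × V)),
      ∀ a b : V, ((a = g1 ∧ b = g2) ∨ (a = g2 ∧ b = g1)) →
        ∃ t1 t2 : ℕ,
          (t1 : ℕ∞) = earliestArrive2 G CV CE 0 s a ∧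
          (t2 : ℕ∞) = earliestArrive2 G CV CE t1 a b ∧
          opt2 G CV CE s g1 g2 < (t2 : ℕ∞) := by
  refine ⟨Fin 4, myG, 0, 1, 2, ∅, myCE, ?_⟩
  rintro a b (⟨rfl, rfl⟩ | ⟨rfl, rfl⟩)
  · refine ⟨1, 4, ?_, ?_, ?_⟩
    · rw [e1]; norm_num
    · rw [e2]; norm_num
    · rw [show ((4:ℕ):ℕ∞) = 4 by norm_num]
      exact lt_of_le_of_lt eopt (by norm_num)
  · refine ⟨3, 4, ?_, ?_, ?_⟩
    · rw [e3]; norm_num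
    · rw [e4]; norm_num
    · rw [show ((4:ℕ):ℕ∞) = 4 by norm_num]
      exact lt_of_le_of_lt eopt (by norm_num)
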